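/- For N ≥ 1 and k ≥ 1, the kernel of Φ_k has a basis consisting of the tuples Q_{m,i,j} ∈ (𝒫^k)^N, indexed by multi-indices m ∈ ℕ^N with |m| = k−1 and pairs of indices 1 ≤ i < j ≤ N with j ≥ max{ℓ : m_ℓ > 0}, where Q_{m,i,j} has j-th component y^m·y_i, i-th component −y^m·y_j, and all other components zero. In particular, ker Φ_k is spanned over ℝ by the tuples y^m·(y_i·e_j − y_j·e_i) over all multi-indices m with |m| = k−1 and all pairs i ≠ j (e_i denoting the i-th standard basis tuple). -/

import Mathlib

open MvPolynomial

/-- The tuple `Q_{m,i,j} = y^m·(y_i·e_j − y_j·e_i)` in `(𝒫^k)^N`. -/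
noncomputable def Qv (N : ℕ) (m : Fin N →₀ ℕ) (i j : Fin N) :
    Fin N → MvPolynomial (Fin N) ℝ :=
  Pi.single j (monomial m 1 * X i) - Pi.single i (monomial m 1 * X j)

/-- The index set for the basis of `ker Φ_k`: multi-indices `m` with `|m| = k−1` and pairs
`i < j` with `j ≥ max{ℓ : m_ℓ > 0}`. -/
def BasisIdx (N k : ℕ) : Type :=
  {q : (Fin N →₀ ℕ) × Fin N × Fin N //
    (q.1.sum fun _ e => e) = k - 1 ∧ q.2.1 < q.2.2 ∧ ∀ l : Fin N, q.1 l ≠ 0 → l ≤ q.2.2}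

namespace KBAux

variable {N k : ℕ}

lemma deg_add (a b : Fin N →₀ ℕ) :
    ((a + b).sum fun _ e => e) = (a.sum fun _ e => e) + (b.sum fun _ e => e) :=
  Finsupp.sum_add_index' (fun _ => rfl) (fun _ _ _ => rfl)

lemma deg_single (i : Fin N) (c : ℕ) :
    ((Finsupp.single i c).sum fun _ e => e) = c := Finsupp.sum_single_index rfl

lemma deg_eq_degree (m : Fin N →₀ ℕ) : (m.sum fun _ e => e) = m.degree := by
  simp [Finsupp.degree, Finsupp.sum]
  rfl

lemma mon_mul_X (m : Fin N →₀ ℕ) (i : Fin N) :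
    (monomial m (1:ℝ) : MvPolynomial (Fin N) ℝ) * X i = monomial (m + Finsupp.single i 1) 1 := by
  rw [X, monomial_mul, mul_one]

lemma Qv_apply (m : Fin N →₀ ℕ) (i j x : Fin N) :
    Qv N m i j x = (if x = j then monomial m 1 * X i else 0)
      - (if x = i then monomial m 1 * X j else 0) := by
  simp [Qv, Pi.single_apply]

lemma Qv_swap (m : Fin N →₀ ℕ) (i j : Fin N) : Qv N m j i = -Qv N m i j := by
  rw [Qv, Qv, neg_sub]

lemma Qv_rel (n : Fin N →₀ ℕ) (a b c : Fin N) :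
    Qv N (n + Finsupp.single a 1) b c
      = Qv N (n + Finsupp.single b 1) a c - Qv N (n + Finsupp.single c 1) a b := by
  funext x
  simp only [Qv_apply, Pi.sub_apply, mon_mul_X]
  have h1 : n + Finsupp.single b 1 + Finsupp.single a 1
      = n + Finsupp.single a 1 + Finsupp.single b 1 := add_right_comm _ _ _
  have h2 : n + Finsupp.single c 1 + Finsupp.single a 1
      = n + Finsupp.single a 1 + Finsupp.single c 1 := add_right_comm _ _ _
  have h3 : n + Finsupp.single c 1 + Finsupp.single b 1
      = n + Finsupp.single b 1 + Finsupp.single c 1 := add_right_comm _ _ _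
  rw [h1, h2, h3]
  abel

lemma coeff_Qv (m' : Fin N →₀ ℕ) (i' j' : Fin N) (n : Fin N →₀ ℕ) (x : Fin N) :
    coeff n (Qv N m' i' j' x)
      = (if x = j' ∧ m' + Finsupp.single i' 1 = n then 1 else 0)
        - (if x = i' ∧ m' + Finsupp.single j' 1 = n then 1 else 0) := by
  rw [Qv_apply]
  by_cases h1 : x = j' <;> by_cases h2 : m' + Finsupp.single i' 1 = n <;>
    by_cases h3 : x = i' <;> by_cases h4 : m' + Finsupp.single j' 1 = n <;>
    simp [h1, h2, h3, h4, mon_mul_X, coeff_monomial, coeff_sub] <;>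
    split_ifs <;> simp_all [coeff_monomial]


lemma Lval (q q' : BasisIdx N k) [Decidable (q' = q)] :
    coeff (q.1.1 + Finsupp.single q.1.2.2 1) (Qv N q'.1.1 q'.1.2.1 q'.1.2.2 q.1.2.1)
      = if q' = q then -1 else 0 := by
  classical
  obtain ⟨⟨m, i, j⟩, hm, hij, hsup⟩ := q
  obtain ⟨⟨m', i', j'⟩, hm', hij', hsup'⟩ := q'
  simp only at hij hsup hij' hsup' ⊢
  rw [coeff_Qv]
  have h1 : ¬ (i = j' ∧ m' + Finsupp.single i' 1 = m + Finsupp.single j 1) := by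
    rintro ⟨rfl, heq⟩
    have hi'j : i' ≠ j := ne_of_lt (lt_trans hij' hij)
    have hj := DFunLike.congr_fun heq j
    simp [Finsupp.single_apply, hi'j] at hj
    have hle : j ≤ i := hsup' j (by omega)
    exact absurd hij (not_lt.mpr hle)
  rw [if_neg h1, zero_sub]
  by_cases h2 : i = i' ∧ m' + Finsupp.single j' 1 = m + Finsupp.single j 1
  · obtain ⟨hii', heq⟩ := h2
    have hjj' : j' = j := by
      by_contra hne
      have hj := DFunLike.congr_fun heq j
      have hj' := DFunLike.congr_fun heq j'
      simp [Finsupp.single_apply, hne, (Ne.symm hne : ¬ j = j')] at hj hj'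
      have h3 : j ≤ j' := hsup' j (by omega)
      have h4 : j' ≤ j := hsup j' (by omega)
      exact hne (le_antisymm h4 h3)
    subst hjj'
    have hmm : m' = m := add_right_cancel heq
    subst hmm
    subst hii'
    rw [if_pos ⟨rfl, rfl⟩]
    exact (if_pos rfl).symm
  · rw [if_neg h2, if_neg, neg_zero]
    intro heq
    have h3 := Subtype.mk_eq_mk.mp heq
    have h4 : m' = m := congrArg Prod.fst h3
    have h5 : i' = i := congrArg (fun p => p.2.1) h3
    have h6 : j' = j := congrArg (fun p => p.2.2) h3
    exact h2 ⟨h5.symm, by rw [h4, h6]⟩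

lemma indep : LinearIndependent ℝ (fun q : BasisIdx N k => Qv N q.1.1 q.1.2.1 q.1.2.2) := by
  classical
  rw [linearIndependent_iff']
  intro s g hsum q hq
  have h0 := congrArg
    ((lcoeff ℝ (q.1.1 + Finsupp.single q.1.2.2 1)).comp
      (LinearMap.proj (R := ℝ) (φ := fun _ : Fin N => MvPolynomial (Fin N) ℝ) q.1.2.1)) hsum
  rw [map_sum, map_zero] at h0
  have h1 : ∀ q' ∈ s,
      ((lcoeff ℝ (q.1.1 + Finsupp.single q.1.2.2 1)).comp
        (LinearMap.proj (R := ℝ) (φ := fun _ : Fin N => MvPolynomial (Fin N) ℝ) q.1.2.1))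
        (g q' • Qv N q'.1.1 q'.1.2.1 q'.1.2.2)
      = if q' = q then -(g q') else 0 := by
    intro q' _
    rw [map_smul]
    simp only [LinearMap.comp_apply, LinearMap.proj_apply, lcoeff_apply, Pi.smul_apply,
      MvPolynomial.coeff_smul]
    rw [Lval q q']
    split_ifs <;> simp [smul_eq_mul]
  rw [Finset.sum_congr rfl h1, Finset.sum_ite_eq' s q (fun q' => -(g q')), if_pos hq] at h0
  exact neg_eq_zero.mp h0

noncomputable def sp (N k : ℕ) : Submodule ℝ (Fin N → MvPolynomial (Fin N) ℝ) :=
  Submodule.span ℝ (Set.range (fun q : BasisIdx N k => Qv N q.1.1 q.1.2.1 q.1.2.2))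

lemma deg_add' (a b : Fin N →₀ ℕ) :
    ((a + b).sum fun _ e => e) = (a.sum fun _ e => e) + (b.sum fun _ e => e) :=
  Finsupp.sum_add_index' (fun _ => rfl) (fun _ _ _ => rfl)

lemma w_add (a b : Fin N →₀ ℕ) :
    ((a + b).sum fun l e => e * l.val)
      = (a.sum fun l e => e * l.val) + (b.sum fun l e => e * l.val) :=
  Finsupp.sum_add_index' (fun a => zero_mul _) (fun a b₁ b₂ => add_mul _ _ _)

lemma deg_single' (i : Fin N) : ((Finsupp.single i 1).sum fun _ e => e) = 1 :=
  Finsupp.sum_single_index rfl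

lemma w_single (a : Fin N) : ((Finsupp.single a 1).sum fun l e => e * l.val) = a.val := by
  rw [Finsupp.sum_single_index]
  · exact one_mul _
  · exact zero_mul _

lemma gen_mem : ∀ (W : ℕ) (m : Fin N →₀ ℕ) (i j : Fin N), i < j →
    (m.sum fun _ e => e) = k - 1 → (m.sum fun l e => e * l.val) ≤ W →
    Qv N m i j ∈ sp N k := by
  intro W
  induction W with
  | zero =>
    intro m i j hij hm hw
    by_cases hgood : ∀ l : Fin N, m l ≠ 0 → l ≤ j
    · exact Submodule.subset_span ⟨⟨(m, i, j), hm, hij, hgood⟩, rfl⟩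
    · exfalso
      push_neg at hgood
      obtain ⟨l, hl, hlj⟩ := hgood
      have hls : l ∈ m.support := Finsupp.mem_support_iff.mpr hl
      have h1 : m l * l.val ≤ (m.sum fun l e => e * l.val) :=
        Finset.single_le_sum (f := fun a => m a * a.val) (fun _ _ => Nat.zero_le _) hls
      have h2 : 1 ≤ l.val := lt_of_le_of_lt (Nat.zero_le _) (Fin.lt_def.mp hlj)
      have h3 : 1 ≤ m l := Nat.one_le_iff_ne_zero.mpr hl
      have h4 := Nat.mul_le_mul h3 h2
      omega
  | succ W ih =>
    intro m i j hij hm hw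
    by_cases hgood : ∀ l : Fin N, m l ≠ 0 → l ≤ j
    · exact Submodule.subset_span ⟨⟨(m, i, j), hm, hij, hgood⟩, rfl⟩
    push_neg at hgood
    obtain ⟨l, hl, hjl⟩ := hgood
    have hle : Finsupp.single l 1 ≤ m := Finsupp.single_le_iff.mpr (Nat.one_le_iff_ne_zero.mpr hl)
    set n := m - Finsupp.single l 1 with hn
    have hmn : n + Finsupp.single l 1 = m := tsub_add_cancel_of_le hle
    have hwm : (n.sum fun l e => e * l.val) + l.val ≤ W + 1 := by
      rw [← w_single l, ← w_add, hmn]; exact hw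
    have hdm : (n.sum fun _ e => e) + 1 = k - 1 := by
      rw [← hm, ← hmn, deg_add', deg_single']
    have hil : i < l := hij.trans hjl
    have hilv : i.val < l.val := Fin.lt_def.mp hil
    have hjlv : j.val < l.val := Fin.lt_def.mp hjl
    have m1 : Qv N (n + Finsupp.single i 1) j l ∈ sp N k := by
      apply ih _ j l hjl
      · rw [deg_add', deg_single']; exact hdm
      · rw [w_add, w_single]; omega
    have m2 : Qv N (n + Finsupp.single j 1) i l ∈ sp N k := by
      apply ih _ i l hil
      · rw [deg_add', deg_single']; exact hdm
      · rw [w_add, w_single]; omega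
    rw [← hmn, Qv_rel n l i j,
      show Qv N (n + Finsupp.single i 1) l j = -Qv N (n + Finsupp.single i 1) j l from
        Qv_swap _ _ _,
      show Qv N (n + Finsupp.single j 1) l i = -Qv N (n + Finsupp.single j 1) i l from
        Qv_swap _ _ _]
    exact sub_mem (neg_mem m1) (neg_mem m2)

lemma gen_mem' (m : Fin N →₀ ℕ) (i j : Fin N) (hij : i ≠ j)
    (hm : (m.sum fun _ e => e) = k - 1) : Qv N m i j ∈ sp N k := by
  rcases lt_or_gt_of_ne hij with h | h
  · exact gen_mem _ m i j h hm le_rfl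
  · have h2 := gen_mem (m.sum fun l e => e * l.val) m j i h hm le_rfl
    rw [Qv_swap m j i]
    exact neg_mem h2

noncomputable def Km (N k : ℕ) : Submodule ℝ (Fin N → MvPolynomial (Fin N) ℝ) :=
  (Submodule.pi Set.univ fun _ => homogeneousSubmodule (Fin N) ℝ k) ⊓
  LinearMap.ker (∑ j : Fin N, (LinearMap.mulLeft ℝ (X j : MvPolynomial (Fin N) ℝ)).comp
    (LinearMap.proj j))

lemma mem_Km (P : Fin N → MvPolynomial (Fin N) ℝ) :
    P ∈ Km N k ↔ (∀ j, P j ∈ homogeneousSubmodule (Fin N) ℝ k) ∧ ∑ j, X j * P j = 0 := by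
  rw [Km, Submodule.mem_inf, LinearMap.mem_ker]
  simp [Submodule.mem_pi, LinearMap.sum_apply, LinearMap.comp_apply, LinearMap.proj_apply,
    LinearMap.mulLeft_apply]

lemma Qv_mem_Km (hk : 1 ≤ k) (m : Fin N →₀ ℕ) (i j : Fin N)
    (hm : (m.sum fun _ e => e) = k - 1) (hij : i ≠ j) : Qv N m i j ∈ Km N k := by
  rw [mem_Km]
  have hmon : ∀ a : Fin N, (monomial (m + Finsupp.single a 1) (1:ℝ) : MvPolynomial (Fin N) ℝ)
      ∈ homogeneousSubmodule (Fin N) ℝ k := by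
    intro a
    rw [mem_homogeneousSubmodule]
    apply isHomogeneous_monomial
    rw [← deg_eq_degree, deg_add', deg_single', hm]
    omega
  constructor
  · intro x
    rw [Qv_apply]
    apply sub_mem <;> split_ifs <;>
      first
        | (rw [mon_mul_X]; apply hmon)
        | exact zero_mem _
  · have h1 : ∀ x : Fin N, X x * Qv N m i j x
        = (if x = j then X x * (monomial m 1 * X i) else 0)
          - (if x = i then X x * (monomial m 1 * X j) else 0) := by
      intro x
      rw [Qv_apply]
      split_ifs <;> ring
    rw [Finset.sum_congr rfl (fun x _ => h1 x), Finset.sum_sub_distrib,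
      Finset.sum_ite_eq' Finset.univ j (fun x => X x * (monomial m 1 * X i)),
      Finset.sum_ite_eq' Finset.univ i (fun x => X x * (monomial m 1 * X j)),
      if_pos (Finset.mem_univ j), if_pos (Finset.mem_univ i)]
    ring

lemma ker_le_span (hk : 1 ≤ k) : ∀ (d : ℕ) (P : Fin N → MvPolynomial (Fin N) ℝ),
    (∀ j, P j ∈ homogeneousSubmodule (Fin N) ℝ k) → (∑ j, X j * P j) = 0 →
    (∑ j, (P j).support.card) ≤ d → P ∈ sp N k := by
  intro d
  induction d with
  | zero =>
    intro P hP hker hcard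
    have hP0 : P = 0 := by
      funext j
      have h1 : (P j).support.card = 0 :=
        Nat.le_zero.mp (le_trans (Finset.single_le_sum
          (f := fun j => (P j).support.card) (fun _ _ => Nat.zero_le _) (Finset.mem_univ j))
          hcard)
      have h2 : (P j).support = ∅ := Finset.card_eq_zero.mp h1
      exact support_eq_empty.mp h2
    rw [hP0]; exact zero_mem _
  | succ d ih =>
    intro P hP hker hcard
    by_cases hP0 : P = 0
    · rw [hP0]; exact zero_mem _
    obtain ⟨i, hi⟩ := Function.ne_iff.mp hP0
    obtain ⟨n, hn⟩ := support_nonempty.mpr hi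
    set μ := n + Finsupp.single i 1 with hμdef
    have hμi : 1 ≤ μ i := by
      rw [hμdef]
      simp [Finsupp.add_apply, Finsupp.single_apply]
    have hdegn : n.degree = k := by
      by_contra hne
      exact (MvPolynomial.mem_support_iff.mp hn)
        (((mem_homogeneousSubmodule _ _).mp (hP i)).coeff_eq_zero hne)
    have hdegμ : (μ.sum fun _ e => e) = k + 1 := by
      rw [hμdef, deg_add', deg_single', deg_eq_degree, hdegn]
    set c : Fin N → ℝ := fun j =>
      if Finsupp.single j 1 ≤ μ then coeff (μ - Finsupp.single j 1) (P j) else 0 with hc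
    set Q : Fin N → MvPolynomial (Fin N) ℝ :=
      fun j => monomial (μ - Finsupp.single j 1) (c j) with hQ
    have hmem_iff : ∀ j : Fin N, Finsupp.single j 1 ≤ μ ↔ j ∈ μ.support := by
      intro j
      rw [Finsupp.single_le_iff, Finsupp.mem_support_iff, Nat.one_le_iff_ne_zero]
    have hce : ∀ j : Fin N, c j = coeff μ (X j * P j) := by
      intro j
      rw [coeff_X_mul']
      by_cases hj : Finsupp.single j 1 ≤ μ
      · rw [if_pos ((hmem_iff j).mp hj)]; simp only [hc, if_pos hj]
      · rw [if_neg (fun hmem => hj ((hmem_iff j).mpr hmem))]; simp only [hc, if_neg hj]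
    have hcsum : ∑ j, c j = 0 := by
      calc ∑ j, c j = ∑ j, coeff μ (X j * P j) := Finset.sum_congr rfl (fun j _ => hce j)
        _ = coeff μ (∑ j, X j * P j) := (coeff_sum _ _ _).symm
        _ = 0 := by rw [hker, coeff_zero]
    have hQhom : ∀ j, Q j ∈ homogeneousSubmodule (Fin N) ℝ k := by
      intro j
      by_cases hj : Finsupp.single j 1 ≤ μ
      · rw [hQ]
        rw [mem_homogeneousSubmodule]
        apply isHomogeneous_monomial
        have h1 : (μ - Finsupp.single j 1) + Finsupp.single j 1 = μ := tsub_add_cancel_of_le hj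
        have h2 := congrArg (fun f : Fin N →₀ ℕ => f.sum fun _ e => e) h1
        simp only [deg_add', deg_single'] at h2
        rw [← deg_eq_degree]
        omega
      · have hcj : c j = 0 := by simp only [hc, if_neg hj]
        rw [hQ]
        simp only [hcj, map_zero]
        exact zero_mem _
    have hXQ : ∀ j : Fin N, X j * Q j = monomial μ (c j) := by
      intro j
      by_cases hj : Finsupp.single j 1 ≤ μ
      · rw [hQ]
        rw [X, monomial_mul, one_mul, add_tsub_cancel_of_le hj]
      · have hcj : c j = 0 := by simp only [hc, if_neg hj]
        rw [hQ]
        simp only [hcj, map_zero, mul_zero]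
    have hQker : ∑ j, X j * Q j = 0 := by
      rw [Finset.sum_congr rfl (fun j _ => hXQ j), ← map_sum, hcsum, map_zero]
    have hQsp : Q ∈ sp N k := by
      have hQeq : Q = ∑ j ∈ Finset.univ.erase i,
          c j • Qv N (μ - Finsupp.single j 1 - Finsupp.single i 1) i j := by
        funext x
        rw [Finset.sum_apply]
        by_cases hxi : x = i
        · subst hxi
          have key : ∀ j ∈ Finset.univ.erase x,
              (c j • Qv N (μ - Finsupp.single j 1 - Finsupp.single x 1) x j) x
                = (-(c j)) • monomial (μ - Finsupp.single x 1) (1:ℝ) := by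
            intro j hj
            have hji : j ≠ x := Finset.ne_of_mem_erase hj
            rw [Pi.smul_apply, Qv_apply, if_neg (fun h => hji h.symm), if_pos rfl, zero_sub,
              mon_mul_X]
            by_cases hle : Finsupp.single j 1 ≤ μ
            · have hle2 : Finsupp.single j 1 ≤ μ - Finsupp.single x 1 := by
                rw [Finsupp.single_le_iff, Finsupp.tsub_apply, Finsupp.single_apply,
                  if_neg (fun h : x = j => hji h.symm)]
                have := Finsupp.single_le_iff.mp hle
                omega
              have harr : μ - Finsupp.single j 1 - Finsupp.single x 1 + Finsupp.single j 1
                  = μ - Finsupp.single x 1 := by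
                rw [tsub_right_comm]
                exact tsub_add_cancel_of_le hle2
              rw [harr, smul_neg, neg_smul]
            · have hcj : c j = 0 := by simp only [hc, if_neg hle]
              rw [hcj, zero_smul, neg_zero, zero_smul]
          rw [Finset.sum_congr rfl key, ← Finset.sum_smul]
          have hsum_erase : (∑ j ∈ Finset.univ.erase x, (-(c j))) = c x := by
            rw [Finset.sum_neg_distrib, Finset.sum_erase_eq_sub (Finset.mem_univ x), hcsum]
            ring
          rw [hsum_erase, smul_monomial, smul_eq_mul, mul_one]
        · rw [Finset.sum_eq_single_of_mem x (Finset.mem_erase.mpr ⟨hxi, Finset.mem_univ x⟩)]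
          · rw [Pi.smul_apply, Qv_apply, if_pos rfl, if_neg hxi, sub_zero, mon_mul_X]
            have harr : μ - Finsupp.single x 1 - Finsupp.single i 1 + Finsupp.single i 1
                = μ - Finsupp.single x 1 := by
              apply tsub_add_cancel_of_le
              rw [Finsupp.single_le_iff, Finsupp.tsub_apply, Finsupp.single_apply,
                if_neg (fun h : x = i => hxi h)]
              omega
            rw [harr, smul_monomial, smul_eq_mul, mul_one]
          · intro b hb hbx
            rw [Pi.smul_apply, Qv_apply, if_neg (fun h : x = b => hbx h.symm), if_neg hxi,
              sub_zero, smul_zero]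
      rw [hQeq]
      apply Submodule.sum_mem
      intro j hj
      have hji : j ≠ i := Finset.ne_of_mem_erase hj
      by_cases hle : Finsupp.single j 1 ≤ μ
      · apply Submodule.smul_mem
        apply gen_mem' _ i j (fun h => hji h.symm)
        have hle2 : Finsupp.single i 1 ≤ μ - Finsupp.single j 1 := by
          rw [Finsupp.single_le_iff, Finsupp.tsub_apply, Finsupp.single_apply,
            if_neg (fun h : j = i => hji h)]
          omega
        have h1 : (μ - Finsupp.single j 1 - Finsupp.single i 1) + Finsupp.single i 1
            = μ - Finsupp.single j 1 := tsub_add_cancel_of_le hle2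
        have h2 : (μ - Finsupp.single j 1) + Finsupp.single j 1 = μ := tsub_add_cancel_of_le hle
        have h3 := congrArg (fun f : Fin N →₀ ℕ => f.sum fun _ e => e) h1
        have h4 := congrArg (fun f : Fin N →₀ ℕ => f.sum fun _ e => e) h2
        simp only [deg_add', deg_single'] at h3 h4
        omega
      · have hcj : c j = 0 := by simp only [hc, if_neg hle]
        rw [hcj, zero_smul]
        exact zero_mem _
    have hsub : ∀ j, ((P j - Q j).support) ⊆ (P j).support := by
      intro j s hs
      by_contra hns
      rw [MvPolynomial.mem_support_iff, not_not] at hns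
      rw [MvPolynomial.mem_support_iff] at hs
      apply hs
      rw [coeff_sub, hns, zero_sub, neg_eq_zero, hQ]
      simp only [coeff_monomial]
      split_ifs with he
      · by_cases hle : Finsupp.single j 1 ≤ μ
        · simp only [hc, if_pos hle, he, hns]
        · simp only [hc, if_neg hle]
      · rfl
    have hne_i : n ∉ (P i - Q i).support := by
      rw [MvPolynomial.mem_support_iff, not_not, coeff_sub]
      have h1 : μ - Finsupp.single i 1 = n := by rw [hμdef]; exact add_tsub_cancel_right _ _
      have h2 : c i = coeff n (P i) := by
        simp only [hc, if_pos (show Finsupp.single i 1 ≤ μ from hμdef ▸ le_add_self), h1]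
      rw [hQ]
      simp [coeff_monomial, h1, h2]
    have hlt : (P i - Q i).support.card < (P i).support.card :=
      Finset.card_lt_card ((Finset.ssubset_iff_of_subset (hsub i)).mpr ⟨n, hn, hne_i⟩)
    have hcard' : (∑ j, ((P j - Q j).support.card)) ≤ d := by
      have := Finset.sum_lt_sum (s := Finset.univ)
        (fun j _ => Finset.card_le_card (hsub j)) ⟨i, Finset.mem_univ i, hlt⟩
      omega
    have hPQ : P - Q ∈ sp N k := by
      apply ih (P - Q)
      · intro j
        exact sub_mem (hP j) (hQhom j)
      · calc ∑ j, X j * (P - Q) j = ∑ j, (X j * P j - X j * Q j) :=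
            Finset.sum_congr rfl (fun j _ => by rw [Pi.sub_apply, mul_sub])
          _ = 0 := by rw [Finset.sum_sub_distrib, hker, hQker, sub_zero]
      · simpa using hcard'
    have hfin := add_mem hPQ hQsp
    rwa [sub_add_cancel] at hfin

end KBAux


open KBAux

/-- the kernel of `Φ_k : (𝒫^k)^N → 𝒫^{k+1}`, `(P₁,…,P_N) ↦ ∑_j y_j·P_j`
(on tuples of homogeneous polynomials of degree `k`), has the basis `Q_{m,i,j}` indexed by
`BasisIdx N k`: this family is linearly independent and spans the kernel. In particular the
kernel is spanned by the tuples `y^m·(y_i·e_j − y_j·e_i)` over all `m` with `|m| = k−1` and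
all `i ≠ j`. -/
theorem kernel_basis (N k : ℕ) (hN : 1 ≤ N) (hk : 1 ≤ k) :
    LinearIndependent ℝ (fun q : BasisIdx N k => Qv N q.1.1 q.1.2.1 q.1.2.2) ∧
    ((Submodule.span ℝ
        (Set.range (fun q : BasisIdx N k => Qv N q.1.1 q.1.2.1 q.1.2.2)) :
          Submodule ℝ (Fin N → MvPolynomial (Fin N) ℝ)) : Set (Fin N → MvPolynomial (Fin N) ℝ))
      = {P | (∀ j, P j ∈ homogeneousSubmodule (Fin N) ℝ k) ∧ ∑ j, X j * P j = 0} ∧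
    ((Submodule.span ℝ
        {P | ∃ (m : Fin N →₀ ℕ) (i j : Fin N),
          (m.sum fun _ e => e) = k - 1 ∧ i ≠ j ∧ P = Qv N m i j} :
          Submodule ℝ (Fin N → MvPolynomial (Fin N) ℝ)) : Set (Fin N → MvPolynomial (Fin N) ℝ))
      = {P | (∀ j, P j ∈ homogeneousSubmodule (Fin N) ℝ k) ∧ ∑ j, X j * P j = 0} := by
  classical
  have hset : {P : Fin N → MvPolynomial (Fin N) ℝ |
      (∀ j, P j ∈ homogeneousSubmodule (Fin N) ℝ k) ∧ ∑ j, X j * P j = 0}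
      = (Km N k : Set (Fin N → MvPolynomial (Fin N) ℝ)) := by
    ext P
    rw [Set.mem_setOf_eq, SetLike.mem_coe, mem_Km]
  have h2 : Km N k ≤ sp N k := by
    intro P hP
    rw [mem_Km] at hP
    exact ker_le_span hk (∑ j, (P j).support.card) P hP.1 hP.2 le_rfl
  have h1 : sp N k = Km N k := by
    apply le_antisymm _ h2
    rw [sp, Submodule.span_le]
    rintro _ ⟨q, rfl⟩
    exact Qv_mem_Km hk q.1.1 q.1.2.1 q.1.2.2 q.2.1 (ne_of_lt q.2.2.1)
  have h3 : Submodule.span ℝ {P : Fin N → MvPolynomial (Fin N) ℝ |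
      ∃ (m : Fin N →₀ ℕ) (i j : Fin N),
        (m.sum fun _ e => e) = k - 1 ∧ i ≠ j ∧ P = Qv N m i j} = Km N k := by
    apply le_antisymm
    · rw [Submodule.span_le]
      rintro P ⟨m, i, j, hm, hij, rfl⟩
      exact Qv_mem_Km hk m i j hm hij
    · refine le_trans h2 ?_
      rw [sp, Submodule.span_le]
      rintro _ ⟨q, rfl⟩
      exact Submodule.subset_span ⟨q.1.1, q.1.2.1, q.1.2.2, q.2.1, ne_of_lt q.2.2.1, rfl⟩
  refine ⟨indep, ?_, ?_⟩
  · rw [hset]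
    exact congrArg _ h1
  · rw [hset]
    exact congrArg _ h3
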